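/- Finiteness of the random-walk rate function. The quantity I is finite if and only if the following three integrals are finite: ∫₀ᵀ |x'(t)| log⁺|x'(t)| dt, ∫₀ᵀ (x'(t))⁺ log⁺(1/w⁺(t)) dt, and ∫₀ᵀ (x'(t))⁻ log⁺(1/w⁻(t)) dt (with the conventions log⁺(1/0) = +∞ and 0·(+∞) = 0). -/

import Mathlib

open MeasureTheory
open scoped ENNReal

noncomputable section

/-- `F(a) = ∫₀ᵀ ( a(t)x'(t) − w⁺(t)(e^{a(t)} − 1) − w⁻(t)(e^{−a(t)} − 1) ) dt`. -/
def Frate (T : ℝ) (x' wp wm : ℝ → ℝ) (a : ℝ → ℝ) : ℝ :=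
  ∫ t in Set.Ioc 0 T,
    (a t * x' t - wp t * (Real.exp (a t) - 1) - wm t * (Real.exp (-a t) - 1))

/-- The random-walk rate function
`I = sup { F(a) : a bounded Borel measurable }`, a value in `[0, +∞]`. -/
def Irate (T : ℝ) (x' wp wm : ℝ → ℝ) : EReal :=
  sSup {v : EReal | ∃ a : ℝ → ℝ, Measurable a ∧ (∃ K : ℝ, ∀ t, |a t| ≤ K) ∧
    v = ((Frate T x' wp wm a : ℝ) : EReal)}

/-- `log⁺(1/w)`, with the convention `log⁺(1/0) = +∞`. -/
def plogInv (w : ℝ) : ℝ≥0∞ :=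
  if w = 0 then ⊤ else ENNReal.ofReal (Real.log w⁻¹)

-- core Young-type inequality
lemma young (a s w : ℝ) (hs : 0 < s) (hw : 0 < w) :
    a * s - w * Real.exp a ≤ s * Real.log (s / w) - s := by
  have h := Real.add_one_le_exp (a - Real.log (s / w))
  have hsw : 0 < s / w := div_pos hs hw
  have hexp : Real.exp (a - Real.log (s / w)) = Real.exp a * (w / s) := by
    rw [Real.exp_sub, Real.exp_log hsw]
    field_simp
  rw [hexp] at h
  have h2 : s * ((a - Real.log (s / w)) + 1) ≤ s * (Real.exp a * (w / s)) :=
    mul_le_mul_of_nonneg_left h hs.le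
  have h3 : s * (Real.exp a * (w / s)) = w * Real.exp a := by field_simp
  nlinarith [h2, h3]

lemma upper_one (a s w M : ℝ) (hs : 0 ≤ s) (hw : 0 ≤ w) (hwM : w ≤ M)
    (hpos : 0 < s → 0 < w) :
    a * s - w * (Real.exp a - 1) ≤
      s * max (Real.log s) 0 + s * max (Real.log w⁻¹) 0 + M := by
  rcases hs.lt_or_eq with hs | hs
  · have hw' := hpos hs
    have h := young a s w hs hw'
    have hlog : Real.log (s / w) = Real.log s + Real.log w⁻¹ := by
      rw [div_eq_mul_inv, Real.log_mul (ne_of_gt hs) (by positivity)]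
    have h1 : s * Real.log s ≤ s * max (Real.log s) 0 :=
      mul_le_mul_of_nonneg_left (le_max_left _ _) hs.le
    have h2 : s * Real.log w⁻¹ ≤ s * max (Real.log w⁻¹) 0 :=
      mul_le_mul_of_nonneg_left (le_max_left _ _) hs.le
    nlinarith [h, h1, h2]
  · have he : Real.exp a - 1 ≥ -1 := by nlinarith [Real.exp_pos a]
    subst hs
    have : w * (Real.exp a - 1) ≥ -M := by nlinarith
    simp only [zero_mul, mul_zero]
    nlinarith

lemma posmax_log_split (s : ℝ) :
    max s 0 * max (Real.log (max s 0)) 0 + max (-s) 0 * max (Real.log (max (-s) 0)) 0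
      = |s| * max (Real.log |s|) 0 := by
  rcases le_or_gt s 0 with h | h
  · rw [max_eq_right h, abs_of_nonpos h, max_eq_left (by linarith : 0 ≤ -s)]
    simp
  · rw [max_eq_left h.le, abs_of_pos h, max_eq_right (by linarith : -s ≤ 0)]
    simp

lemma upper_full (a s ωp ωm M : ℝ) (hwp : 0 ≤ ωp) (hwpM : ωp ≤ M)
    (hwm : 0 ≤ ωm) (hwmM : ωm ≤ M)
    (hp : 0 < s → 0 < ωp) (hm : s < 0 → 0 < ωm) :
    a * s - ωp * (Real.exp a - 1) - ωm * (Real.exp (-a) - 1) ≤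
      |s| * max (Real.log |s|) 0
      + max s 0 * max (Real.log (ωp)⁻¹) 0
      + max (-s) 0 * max (Real.log (ωm)⁻¹) 0 + 2 * M := by
  have h1 := upper_one a (max s 0) ωp M (le_max_right _ _) hwp hwpM
    (fun h => hp ((lt_max_iff.mp h).resolve_right (lt_irrefl 0)))
  have h2 := upper_one (-a) (max (-s) 0) ωm M (le_max_right _ _) hwm hwmM
    (fun h => hm (neg_pos.mp ((lt_max_iff.mp h).resolve_right (lt_irrefl 0))))
  have hsplit : a * s = a * max s 0 + (-a) * max (-s) 0 := by
    rcases le_or_gt s 0 with h | h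
    · rw [max_eq_right h, max_eq_left (by linarith : 0 ≤ -s)]; ring
    · rw [max_eq_left h.le, max_eq_right (by linarith : -s ≤ 0)]; ring
  rw [← posmax_log_split]
  nlinarith [h1, h2]

-- σ·log⁺σ ≤ σ·log σ + 1 for σ > 0
lemma xlogplus_le (σ : ℝ) (hσ : 0 < σ) :
    σ * max (Real.log σ) 0 ≤ σ * Real.log σ + 1 := by
  rcases le_or_gt 1 σ with h | h
  · rw [max_eq_left (Real.log_nonneg h)]; linarith
  · rw [max_eq_right (Real.log_nonpos hσ.le h.le)]
    have h1 : Real.log σ⁻¹ ≤ σ⁻¹ - 1 := Real.log_le_sub_one_of_pos (by positivity)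
    rw [Real.log_inv] at h1
    have h2 : σ * (-Real.log σ) ≤ σ * (σ⁻¹ - 1) := mul_le_mul_of_nonneg_left h1 hσ.le
    have h3 : σ * (σ⁻¹ - 1) = 1 - σ := by field_simp
    nlinarith

-- (★) master inequality
lemma star (σ ω M : ℝ) (hσ : 0 < σ) (hω : 0 < ω) (hωM : ω ≤ M) :
    σ * max (Real.log σ) 0 + σ * max (Real.log ω⁻¹) 0 ≤
      σ * max (Real.log (σ / ω)) 0 + σ * max (Real.log M) 0
      + (1 + M * max (Real.log M) 0) := by
  have hM : 0 < M := lt_of_lt_of_le hω hωM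
  have hlogM : Real.log ω ≤ max (Real.log M) 0 :=
    le_trans (Real.log_le_log hω hωM) (le_max_left _ _)
  rcases le_or_gt ω σ with h | h
  · -- ω ≤ σ
    have hd : Real.log (σ / ω) = Real.log σ - Real.log ω := Real.log_div (ne_of_gt hσ) (ne_of_gt hω)
    have hd0 : 0 ≤ Real.log (σ / ω) := Real.log_nonneg ((one_le_div hω).mpr h)
    rw [max_eq_left hd0, hd]
    have h1 := xlogplus_le σ hσ
    have h2 : σ * max (Real.log ω⁻¹) 0 ≤ σ * (-Real.log ω) + σ * max (Real.log M) 0 := by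
      rw [Real.log_inv]
      rcases le_or_gt (Real.log ω) 0 with h'|h'
      · rw [max_eq_left (by linarith)]
        nlinarith [mul_nonneg hσ.le (le_max_right (Real.log M) 0)]
      · rw [max_eq_right (by linarith)]
        nlinarith [mul_le_mul_of_nonneg_left hlogM hσ.le]
    nlinarith [mul_nonneg hM.le (le_max_right (Real.log M) 0)]
  · -- σ < ω
    have h1 : σ * max (Real.log σ) 0 ≤ M * max (Real.log M) 0 := by
      rcases le_or_gt σ 1 with h'|h'
      · rw [max_eq_right (Real.log_nonpos hσ.le h')]
        simp [mul_nonneg hM.le (le_max_right (Real.log M) 0)]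
      · have : Real.log σ ≤ max (Real.log M) 0 :=
          le_trans (Real.log_le_log hσ (by linarith)) (le_max_left _ _)
        calc σ * max (Real.log σ) 0 ≤ σ * max (Real.log M) 0 := by
              apply mul_le_mul_of_nonneg_left _ hσ.le
              exact max_le this (le_max_right _ _)
          _ ≤ M * max (Real.log M) 0 := by
              apply mul_le_mul_of_nonneg_right (by linarith) (le_max_right _ _)
    have h2 : σ * max (Real.log ω⁻¹) 0 ≤ 1 := by
      rcases le_or_gt 1 ω with h'|h'
      · rw [max_eq_right]
        · linarith
        · rw [Real.log_inv]; linarith [Real.log_nonneg h']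
      · have hlog : Real.log ω⁻¹ ≤ ω⁻¹ - 1 := Real.log_le_sub_one_of_pos (by positivity)
        have hl0 : 0 ≤ Real.log ω⁻¹ := by
          rw [Real.log_inv]; linarith [Real.log_nonpos hω.le h'.le]
        rw [max_eq_left hl0]
        have : σ * Real.log ω⁻¹ ≤ ω * Real.log ω⁻¹ :=
          mul_le_mul_of_nonneg_right h.le hl0
        have h3 : ω * Real.log ω⁻¹ ≤ ω * (ω⁻¹ - 1) := mul_le_mul_of_nonneg_left hlog hω.le
        have h4 : ω * (ω⁻¹ - 1) = 1 - ω := by field_simp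
        nlinarith
    have h0 : 0 ≤ σ * max (Real.log (σ / ω)) 0 := mul_nonneg hσ.le (le_max_right _ _)
    have h0' : 0 ≤ σ * max (Real.log M) 0 := mul_nonneg hσ.le (le_max_right _ _)
    nlinarith

lemma lower_one (n σ ω ω2 M : ℝ) (hn : 0 ≤ n) (hσ : 0 < σ) (hω : 0 ≤ ω)
    (hωM : ω ≤ M) (hω2 : 0 ≤ ω2) :
    (if ω = 0 then n else min n (max (Real.log (σ / ω)) 0)) * σ - σ - M ≤
      (if ω = 0 then n else min n (max (Real.log (σ / ω)) 0)) * σ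
        - ω * (Real.exp (if ω = 0 then n else min n (max (Real.log (σ / ω)) 0)) - 1)
        - ω2 * (Real.exp (-(if ω = 0 then n else min n (max (Real.log (σ / ω)) 0))) - 1) := by
  set α := if ω = 0 then n else min n (max (Real.log (σ / ω)) 0) with hα
  have hα0 : 0 ≤ α := by
    rw [hα]; split
    · exact hn
    · exact le_min hn (le_max_right _ _)
  have h2 : ω2 * (Real.exp (-α) - 1) ≤ 0 := by
    have : Real.exp (-α) ≤ 1 := Real.exp_le_one_iff.mpr (by linarith)
    nlinarith
  have h1 : ω * Real.exp α ≤ σ + M := by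
    rw [hα]; split
    · next h0 => rw [h0]; nlinarith
    · next hne =>
      have hω' : 0 < ω := lt_of_le_of_ne hω (Ne.symm hne)
      rcases le_or_gt (Real.log (σ / ω)) 0 with h'|h'
      · have : Real.exp (min n (max (Real.log (σ / ω)) 0)) ≤ 1 := by
          apply Real.exp_le_one_iff.mpr
          exact le_trans (min_le_right _ _) (by simp [max_eq_right h'])
        nlinarith
      · have he : Real.exp (min n (max (Real.log (σ / ω)) 0)) ≤ σ / ω := by
          rw [max_eq_left h'.le]
          calc Real.exp (min n (Real.log (σ / ω))) ≤ Real.exp (Real.log (σ / ω)) :=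
                Real.exp_le_exp.mpr (min_le_right _ _)
            _ = σ / ω := Real.exp_log (by positivity)
        have : ω * Real.exp (min n (max (Real.log (σ / ω)) 0)) ≤ σ := by
          rw [max_eq_left h'.le] at he ⊢
          calc ω * Real.exp (min n (Real.log (σ / ω))) ≤ ω * (σ / ω) :=
                mul_le_mul_of_nonneg_left he hω'.le
            _ = σ := by field_simp
        linarith

  nlinarith [Real.exp_pos α]

lemma frate_integrable (T M : ℝ) (x' wp wm a : ℝ → ℝ)
    (hx'meas : Measurable x') (hx'int : IntegrableOn x' (Set.Ioc 0 T))
    (hwpmeas : Measurable wp) (hwmmeas : Measurable wm)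
    (hwp : ∀ t, wp t ∈ Set.Icc (0:ℝ) M) (hwm : ∀ t, wm t ∈ Set.Icc (0:ℝ) M)
    (hameas : Measurable a) (K : ℝ) (hK : ∀ t, |a t| ≤ K) :
    IntegrableOn (fun t =>
      a t * x' t - wp t * (Real.exp (a t) - 1) - wm t * (Real.exp (-a t) - 1))
      (Set.Ioc 0 T) := by
  have hμ : volume (Set.Ioc (0:ℝ) T) < ⊤ := by
    rw [Real.volume_Ioc]; exact ENNReal.ofReal_lt_top
  have h1 : IntegrableOn (fun t => a t * x' t) (Set.Ioc 0 T) :=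
    hx'int.bdd_mul (c := K) hameas.aestronglyMeasurable (Filter.Eventually.of_forall fun t => by simpa using hK t)
  have hbd : ∀ (w : ℝ → ℝ) (b : ℝ → ℝ), Measurable w → Measurable b →
      (∀ t, w t ∈ Set.Icc (0:ℝ) M) → (∀ t, |b t| ≤ K) →
      IntegrableOn (fun t => w t * (Real.exp (b t) - 1)) (Set.Ioc 0 T) := by
    intro w b hw hb hwB hbB
    refine ⟨((hw.mul ((Real.measurable_exp.comp hb).sub measurable_const))).aestronglyMeasurable, ?_⟩
    apply MeasureTheory.HasFiniteIntegral.of_bounded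
      (C := |M| * (Real.exp K + 1))
    filter_upwards with t
    have h1 : |w t| ≤ |M| := by
      have := hwB t
      rw [abs_of_nonneg this.1]
      exact le_trans this.2 (le_abs_self M)
    have h2 : |Real.exp (b t) - 1| ≤ Real.exp K + 1 := by
      have hb1 : Real.exp (b t) ≤ Real.exp K := Real.exp_le_exp.mpr (le_trans (le_abs_self _) (hbB t))
      have hb2 : 0 < Real.exp (b t) := Real.exp_pos _
      rw [abs_le]; constructor <;> nlinarith
    calc ‖w t * (Real.exp (b t) - 1)‖ = |w t| * |Real.exp (b t) - 1| := abs_mul _ _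
      _ ≤ |M| * (Real.exp K + 1) := by
          apply mul_le_mul h1 h2 (abs_nonneg _) (abs_nonneg _)
  have h2 := hbd wp a hwpmeas hameas hwp hK
  have h3 := hbd wm (fun t => -a t) hwmmeas hameas.neg hwm (fun t => by simpa using hK t)
  exact (h1.sub h2).sub h3

lemma pointwise_sup (M : ℝ) (hM : 0 < M) (σ ω : ℝ) (hω : ω ∈ Set.Icc 0 M) :
    ENNReal.ofReal (max σ 0 * max (Real.log (max σ 0)) 0)
      + ENNReal.ofReal (max σ 0) * plogInv ω ≤
    (⨆ n : ℕ, ENNReal.ofReal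
        ((if 0 < σ then (if ω = 0 then (n:ℝ)
            else min n (max (Real.log (σ/ω)) 0)) else 0) * σ))
      + ENNReal.ofReal (max σ 0 * max (Real.log M) 0
          + (1 + M * max (Real.log M) 0)) := by
  rcases le_or_gt σ 0 with hσ | hσ
  · rw [max_eq_right hσ]
    simp
  · rw [max_eq_left hσ.le]
    rcases eq_or_lt_of_le hω.1 with hω0 | hω0
    · -- ω = 0 : RHS sup is ⊤
      have hsup : (⨆ n : ℕ, ENNReal.ofReal
          ((if 0 < σ then (if ω = 0 then (n:ℝ)
              else min n (max (Real.log (σ/ω)) 0)) else 0) * σ)) = ⊤ := by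
        simp only [if_pos hσ, if_pos hω0.symm]
        have hn : ∀ n : ℕ, ENNReal.ofReal ((n:ℝ) * σ) = (n : ℝ≥0∞) * ENNReal.ofReal σ := by
          intro n
          rw [ENNReal.ofReal_mul (Nat.cast_nonneg n), ENNReal.ofReal_natCast]
        simp_rw [hn]
        rw [← ENNReal.iSup_mul, ENNReal.iSup_natCast, ENNReal.top_mul]
        simp only [ne_eq, ENNReal.ofReal_eq_zero, not_le]
        exact hσ
      rw [hsup]
      simp
    · -- ω > 0
      have hne : ω ≠ 0 := ne_of_gt hω0
      set L := max (Real.log (σ/ω)) 0 with hL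
      have hL0 : 0 ≤ L := le_max_right _ _
      have key : ENNReal.ofReal (σ * max (Real.log σ) 0)
          + ENNReal.ofReal σ * plogInv ω ≤
          ENNReal.ofReal (σ * L) + ENNReal.ofReal (σ * max (Real.log M) 0
            + (1 + M * max (Real.log M) 0)) := by
        have hplog : ENNReal.ofReal σ * plogInv ω
            = ENNReal.ofReal (σ * max (Real.log ω⁻¹) 0) := by
          rw [plogInv, if_neg hne]
          rcases le_or_gt (Real.log ω⁻¹) 0 with h' | h'
          · rw [max_eq_right h', ENNReal.ofReal_of_nonpos h', mul_zero, mul_zero,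
              ENNReal.ofReal_zero]
          · rw [max_eq_left h'.le, ← ENNReal.ofReal_mul hσ.le]
        rw [hplog, ← ENNReal.ofReal_add (by positivity) (by positivity)]
        calc ENNReal.ofReal (σ * max (Real.log σ) 0 + σ * max (Real.log ω⁻¹) 0)
            ≤ ENNReal.ofReal (σ * L + (σ * max (Real.log M) 0
                + (1 + M * max (Real.log M) 0))) := by
              apply ENNReal.ofReal_le_ofReal
              have := star σ ω M hσ hω0 hω.2
              linarith
          _ ≤ _ := ENNReal.ofReal_add_le
      refine le_trans key (add_le_add ?_ le_rfl)
      refine le_trans ?_ (le_iSup _ (Nat.ceil L))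
      apply ENNReal.ofReal_le_ofReal
      rw [if_pos hσ, if_neg hne, min_eq_right (Nat.le_ceil L)]
      linarith

lemma irate_diverge_aux (T M : ℝ) (hT : 0 < T) (hM : 0 < M)
    (s w w2 : ℝ → ℝ) (hsmeas : Measurable s) (hsint : IntegrableOn s (Set.Ioc 0 T))
    (hwmeas : Measurable w) (hw2meas : Measurable w2)
    (hw : ∀ t, w t ∈ Set.Icc (0:ℝ) M) (hw2 : ∀ t, w2 t ∈ Set.Icc (0:ℝ) M)
    (hdiv : (∫⁻ t in Set.Ioc 0 T,
        (ENNReal.ofReal (max (s t) 0 * max (Real.log (max (s t) 0)) 0)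
          + ENNReal.ofReal (max (s t) 0) * plogInv (w t))) = ⊤)
    (C : ℝ) :
    ∃ a : ℝ → ℝ, Measurable a ∧ (∃ K : ℝ, ∀ t, |a t| ≤ K) ∧ C ≤ Frate T s w w2 a := by
  classical
  set μ := volume.restrict (Set.Ioc (0:ℝ) T) with hμdef
  have hμfin : volume (Set.Ioc (0:ℝ) T) < ⊤ := by
    rw [Real.volume_Ioc]; exact ENNReal.ofReal_lt_top
  set αf : ℕ → ℝ → ℝ := fun n t =>
    if 0 < s t then (if w t = 0 then (n:ℝ)
      else min (n:ℝ) (max (Real.log (s t / w t)) 0)) else 0 with hαf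
  have hαmeas : ∀ n, Measurable (αf n) := by
    intro n
    apply Measurable.ite (measurableSet_lt measurable_const hsmeas)
    · exact Measurable.ite (hwmeas (measurableSet_singleton 0)) measurable_const
        (measurable_const.min (((hsmeas.div hwmeas).log).max measurable_const))
    · exact measurable_const
  have hα0 : ∀ n t, 0 ≤ αf n t := by
    intro n t
    rw [hαf]
    dsimp only
    split
    · split
      · positivity
      · exact le_min (Nat.cast_nonneg n) (le_max_right _ _)
    · exact le_rfl
  have hαbd : ∀ n t, αf n t ≤ n := by
    intro n t
    rw [hαf]; dsimp only
    split
    · split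
      · exact le_rfl
      · exact min_le_left _ _
    · positivity
  have hg0 : ∀ n t, 0 ≤ αf n t * s t := by
    intro n t
    rcases lt_or_ge 0 (s t) with h | h
    · exact mul_nonneg (hα0 n t) h.le
    · have : αf n t = 0 := by rw [hαf]; simp only; rw [if_neg (not_lt.mpr h)]
      rw [this, zero_mul]
  have hgmono : ∀ t, Monotone fun n : ℕ => ENNReal.ofReal (αf n t * s t) := by
    intro t n m hnm
    apply ENNReal.ofReal_le_ofReal
    rcases lt_or_ge 0 (s t) with h | h
    · apply mul_le_mul_of_nonneg_right _ h.le
      rw [hαf]; dsimp only; rw [if_pos h, if_pos h]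
      split
      · exact_mod_cast Nat.cast_le.mpr hnm
      · exact min_le_min (Nat.cast_le.mpr hnm) le_rfl
    · have h1 : αf n t = 0 := by rw [hαf]; simp only; rw [if_neg (not_lt.mpr h)]
      have h2 : αf m t = 0 := by rw [hαf]; simp only; rw [if_neg (not_lt.mpr h)]
      rw [h1, h2]
  have hgmeas : ∀ n, Measurable fun t => ENNReal.ofReal (αf n t * s t) :=
    fun n => ((hαmeas n).mul hsmeas).ennreal_ofReal
  -- the sup integral is infinite
  have habs : (∫⁻ t, ENNReal.ofReal |s t| ∂μ) < ⊤ := by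
    have := hsint.2
    rw [MeasureTheory.hasFiniteIntegral_iff_norm] at this
    simpa [Real.norm_eq_abs] using this
  have hDfin : (∫⁻ t, ENNReal.ofReal (max (s t) 0 * max (Real.log M) 0
      + (1 + M * max (Real.log M) 0)) ∂μ) ≠ ⊤ := by
    have hb : ∀ t, ENNReal.ofReal (max (s t) 0 * max (Real.log M) 0
        + (1 + M * max (Real.log M) 0)) ≤
        ENNReal.ofReal (max (Real.log M) 0) * ENNReal.ofReal |s t|
          + ENNReal.ofReal (1 + M * max (Real.log M) 0) := by
      intro t
      refine le_trans ENNReal.ofReal_add_le (add_le_add ?_ le_rfl)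
      rw [← ENNReal.ofReal_mul (le_max_right _ _)]
      apply ENNReal.ofReal_le_ofReal
      have habs' : max (s t) 0 ≤ |s t| := max_le (le_abs_self _) (abs_nonneg _)
      calc max (s t) 0 * max (Real.log M) 0
          = max (Real.log M) 0 * max (s t) 0 := mul_comm _ _
        _ ≤ max (Real.log M) 0 * |s t| :=
            mul_le_mul_of_nonneg_left habs' (le_max_right _ _)
    apply ne_of_lt
    calc (∫⁻ t, ENNReal.ofReal (max (s t) 0 * max (Real.log M) 0
        + (1 + M * max (Real.log M) 0)) ∂μ)
        ≤ ∫⁻ t, (ENNReal.ofReal (max (Real.log M) 0) * ENNReal.ofReal |s t|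
          + ENNReal.ofReal (1 + M * max (Real.log M) 0)) ∂μ := lintegral_mono hb
      _ = ENNReal.ofReal (max (Real.log M) 0) * (∫⁻ t, ENNReal.ofReal |s t| ∂μ)
          + ENNReal.ofReal (1 + M * max (Real.log M) 0) * μ Set.univ := by
          rw [lintegral_add_right _ (measurable_const), lintegral_const_mul _ hsmeas.abs.ennreal_ofReal,
            lintegral_const]
      _ < ⊤ := by
          apply ENNReal.add_lt_top.mpr
          constructor
          · exact ENNReal.mul_lt_top ENNReal.ofReal_lt_top habs
          · apply ENNReal.mul_lt_top ENNReal.ofReal_lt_top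
            rw [hμdef, Measure.restrict_apply_univ]
            exact hμfin
  have hsuptop : (⨆ n, ∫⁻ t, ENNReal.ofReal (αf n t * s t) ∂μ) = ⊤ := by
    rw [← MeasureTheory.lintegral_iSup hgmeas (fun n m hnm t => hgmono t hnm)]
    by_contra hne
    have hle : (∫⁻ t in Set.Ioc 0 T,
        (ENNReal.ofReal (max (s t) 0 * max (Real.log (max (s t) 0)) 0)
          + ENNReal.ofReal (max (s t) 0) * plogInv (w t))) ≤
        (∫⁻ t, (⨆ n, ENNReal.ofReal (αf n t * s t)) ∂μ)
          + (∫⁻ t, ENNReal.ofReal (max (s t) 0 * max (Real.log M) 0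
            + (1 + M * max (Real.log M) 0)) ∂μ) := by
      rw [← lintegral_add_left (Measurable.iSup hgmeas)]
      apply lintegral_mono
      intro t
      have := pointwise_sup M hM (s t) (w t) (hw t)
      simpa [hαf] using this
    rw [hdiv] at hle
    rcases ENNReal.add_eq_top.mp (top_le_iff.mp hle) with h | h
    · exact hne h
    · exact hDfin h
  have hsint' : Integrable (fun t => max (s t) 0) μ := hsint.pos_part
  set Rr : ℝ := max C 0 + (∫ t, max (s t) 0 ∂μ) + M * T with hRr
  have hposint : 0 ≤ ∫ t, max (s t) 0 ∂μ :=
    integral_nonneg (fun t => le_max_right _ _)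
  have hRr0 : 0 ≤ Rr := by
    rw [hRr]
    have := le_max_right C 0
    nlinarith [mul_nonneg hM.le hT.le]
  obtain ⟨N, hN⟩ : ∃ n : ℕ,
      ENNReal.ofReal Rr < ∫⁻ t, ENNReal.ofReal (αf n t * s t) ∂μ := by
    apply lt_iSup_iff.mp
    rw [hsuptop]
    exact ENNReal.ofReal_lt_top
  have hbound : ∀ t, αf N t * s t ≤ (N:ℝ) * |s t| := by
    intro t
    rcases lt_or_ge 0 (s t) with h|h
    · nlinarith [hαbd N t, hα0 N t, le_abs_self (s t), abs_nonneg (s t)]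
    · have h1 : αf N t = 0 := by
        rw [hαf]; simp only; rw [if_neg (not_lt.mpr h)]
      rw [h1, zero_mul]; positivity
  have hGfin : (∫⁻ t, ENNReal.ofReal (αf N t * s t) ∂μ) ≠ ⊤ := by
    apply ne_of_lt
    calc ∫⁻ t, ENNReal.ofReal (αf N t * s t) ∂μ
        ≤ ∫⁻ t, ENNReal.ofReal (N:ℝ) * ENNReal.ofReal |s t| ∂μ := by
          apply lintegral_mono
          intro t
          show ENNReal.ofReal (αf N t * s t) ≤ ENNReal.ofReal (N:ℝ) * ENNReal.ofReal |s t|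
          rw [← ENNReal.ofReal_mul (Nat.cast_nonneg N)]
          exact ENNReal.ofReal_le_ofReal (hbound t)
      _ = ENNReal.ofReal (N:ℝ) * ∫⁻ t, ENNReal.ofReal |s t| ∂μ :=
          lintegral_const_mul _ hsmeas.abs.ennreal_ofReal
      _ < ⊤ := ENNReal.mul_lt_top ENNReal.ofReal_lt_top habs
  have hgNmeas : Measurable fun t => αf N t * s t := (hαmeas N).mul hsmeas
  have hgNint : Integrable (fun t => αf N t * s t) μ := by
    apply Integrable.mono' ((hsint.abs).const_mul (N:ℝ)) hgNmeas.aestronglyMeasurable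
    filter_upwards with t
    rw [Real.norm_eq_abs, abs_of_nonneg (hg0 N t)]
    exact hbound t
  have hintval : ∫ t, αf N t * s t ∂μ
      = (∫⁻ t, ENNReal.ofReal (αf N t * s t) ∂μ).toReal :=
    integral_eq_lintegral_of_nonneg_ae (Filter.Eventually.of_forall (hg0 N))
      hgNmeas.aestronglyMeasurable
  have hRle : Rr ≤ ∫ t, αf N t * s t ∂μ := by
    rw [hintval]
    exact (ENNReal.ofReal_le_iff_le_toReal hGfin).mp hN.le
  have hconstint : Integrable (fun _ : ℝ => M) μ := by
    rw [hμdef]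
    exact integrableOn_const hμfin.ne
  have hFint := frate_integrable T M s w w2 (αf N) hsmeas hsint hwmeas hw2meas
    hw hw2 (hαmeas N) (N:ℝ) (fun t => by
      rw [abs_of_nonneg (hα0 N t)]; exact hαbd N t)
  have hlow : ∀ t, αf N t * s t - max (s t) 0 - M ≤
      αf N t * s t - w t * (Real.exp (αf N t) - 1)
        - w2 t * (Real.exp (-(αf N t)) - 1) := by
    intro t
    rcases lt_or_ge 0 (s t) with h|h
    · have hmax : max (s t) 0 = s t := max_eq_left h.le
      have hα : αf N t
          = (if w t = 0 then (N:ℝ) else min (N:ℝ) (max (Real.log (s t / w t)) 0)) := by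
        rw [hαf]; simp only; rw [if_pos h]
      rw [hα, hmax]
      exact lower_one (N:ℝ) (s t) (w t) (w2 t) M (Nat.cast_nonneg N) h
        (hw t).1 (hw t).2 (hw2 t).1
    · have h1 : αf N t = 0 := by
        rw [hαf]; simp only; rw [if_neg (not_lt.mpr h)]
      rw [h1, max_eq_right h]
      simp only [zero_mul, neg_zero, Real.exp_zero, sub_self, mul_zero, sub_zero,
        zero_sub]
      linarith [hM]
  have hint1 : Integrable (fun t => αf N t * s t - max (s t) 0) μ := hgNint.sub hsint'
  have hint2 : Integrable (fun t => αf N t * s t - max (s t) 0 - M) μ :=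
    hint1.sub hconstint
  have hFge : (∫ t, (αf N t * s t - max (s t) 0 - M) ∂μ) ≤ Frate T s w w2 (αf N) := by
    rw [Frate, ← hμdef]
    exact integral_mono hint2 hFint hlow
  have hsplit : (∫ t, (αf N t * s t - max (s t) 0 - M) ∂μ)
      = (∫ t, αf N t * s t ∂μ) - (∫ t, max (s t) 0 ∂μ) - (∫ t, (M:ℝ) ∂μ) := by
    rw [integral_sub hint1 hconstint, integral_sub hgNint hsint']
  have hconst : (∫ t, (M:ℝ) ∂μ) = T * M := by
    rw [hμdef, integral_const, measureReal_restrict_apply_univ, Real.volume_real_Ioc,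
      sub_zero, max_eq_left hT.le, smul_eq_mul]
  refine ⟨αf N, hαmeas N, ⟨(N:ℝ), fun t => by
    rw [abs_of_nonneg (hα0 N t)]; exact hαbd N t⟩, ?_⟩
  have hCle : C ≤ Rr - (∫ t, max (s t) 0 ∂μ) - T * M := by
    rw [hRr]
    have := le_max_left C 0
    nlinarith
  calc C ≤ Rr - (∫ t, max (s t) 0 ∂μ) - T * M := hCle
    _ ≤ (∫ t, αf N t * s t ∂μ) - (∫ t, max (s t) 0 ∂μ) - T * M := by linarith
    _ = (∫ t, (αf N t * s t - max (s t) 0 - M) ∂μ) := by rw [hsplit, hconst]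
    _ ≤ Frate T s w w2 (αf N) := hFge

lemma measurable_plogInv : Measurable plogInv := by
  unfold plogInv
  exact Measurable.ite (measurableSet_singleton 0) measurable_const
    ((Real.measurable_log.comp measurable_inv).ennreal_ofReal)

lemma ofReal_mul_plogInv_ge (σ ω : ℝ) :
    ENNReal.ofReal (max σ 0 * max (Real.log ω⁻¹) 0) ≤
      ENNReal.ofReal (max σ 0) * plogInv ω := by
  rcases eq_or_ne ω 0 with h | h
  · subst h
    simp [plogInv]
  · rw [plogInv, if_neg h]
    rcases le_or_gt (Real.log ω⁻¹) 0 with h' | h'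
    · rw [max_eq_right h', mul_zero]
      simp
    · rw [max_eq_left h'.le, ← ENNReal.ofReal_mul (le_max_right _ _)]

lemma irate_finite (T M : ℝ) (hT : 0 < T) (hM : 0 < M)
    (x' wp wm : ℝ → ℝ) (hx'meas : Measurable x') (hx'int : IntegrableOn x' (Set.Ioc 0 T))
    (hwpmeas : Measurable wp) (hwmmeas : Measurable wm)
    (hwp : ∀ t, wp t ∈ Set.Icc (0:ℝ) M) (hwm : ∀ t, wm t ∈ Set.Icc (0:ℝ) M)
    (hA : (∫⁻ t in Set.Ioc 0 T,
        ENNReal.ofReal (|x' t| * max (Real.log |x' t|) 0)) ≠ ⊤)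
    (hBp : (∫⁻ t in Set.Ioc 0 T,
        ENNReal.ofReal (max (x' t) 0) * plogInv (wp t)) ≠ ⊤)
    (hBm : (∫⁻ t in Set.Ioc 0 T,
        ENNReal.ofReal (max (-x' t) 0) * plogInv (wm t)) ≠ ⊤) :
    Irate T x' wp wm ≠ ⊤ := by
  set μ := volume.restrict (Set.Ioc (0:ℝ) T) with hμdef
  have hμfin : volume (Set.Ioc (0:ℝ) T) < ⊤ := by
    rw [Real.volume_Ioc]; exact ENNReal.ofReal_lt_top
  -- a.e. implications
  have hBpmeas : Measurable fun t => ENNReal.ofReal (max (x' t) 0) * plogInv (wp t) :=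
    ((hx'meas.max measurable_const).ennreal_ofReal).mul (measurable_plogInv.comp hwpmeas)
  have hBmmeas : Measurable fun t => ENNReal.ofReal (max (-x' t) 0) * plogInv (wm t) :=
    ((hx'meas.neg.max measurable_const).ennreal_ofReal).mul (measurable_plogInv.comp hwmmeas)
  have hp : ∀ᵐ t ∂μ, 0 < x' t → 0 < wp t := by
    filter_upwards [ae_lt_top hBpmeas hBp] with t ht hx
    by_contra hcon
    push_neg at hcon
    have hw0 : wp t = 0 := le_antisymm hcon (hwp t).1
    rw [hw0, plogInv, if_pos rfl, ENNReal.mul_top] at ht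
    · exact absurd ht (lt_irrefl _)
    · simp only [ne_eq, ENNReal.ofReal_eq_zero, not_le]
      exact lt_max_of_lt_left hx
  have hm : ∀ᵐ t ∂μ, x' t < 0 → 0 < wm t := by
    filter_upwards [ae_lt_top hBmmeas hBm] with t ht hx
    by_contra hcon
    push_neg at hcon
    have hw0 : wm t = 0 := le_antisymm hcon (hwm t).1
    rw [hw0, plogInv, if_pos rfl, ENNReal.mul_top] at ht
    · exact absurd ht (lt_irrefl _)
    · simp only [ne_eq, ENNReal.ofReal_eq_zero, not_le]
      exact lt_max_of_lt_left (by linarith)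
  -- dominating function
  set h : ℝ → ℝ := fun t => |x' t| * max (Real.log |x' t|) 0
      + max (x' t) 0 * max (Real.log (wp t)⁻¹) 0
      + max (-x' t) 0 * max (Real.log (wm t)⁻¹) 0 + 2 * M with hhdef
  have hhmeas : Measurable h := by
    apply Measurable.add
    apply Measurable.add
    apply Measurable.add
    · exact (hx'meas.abs.mul ((hx'meas.abs.log).max measurable_const))
    · exact ((hx'meas.max measurable_const).mul
        (((hwpmeas.inv).log).max measurable_const))
    · exact ((hx'meas.neg.max measurable_const).mul
        (((hwmmeas.inv).log).max measurable_const))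
    · exact measurable_const
  have hh0 : ∀ t, 0 ≤ h t := by
    intro t
    rw [hhdef]
    have h1 : (0:ℝ) ≤ |x' t| * max (Real.log |x' t|) 0 := by positivity
    have h2 : (0:ℝ) ≤ max (x' t) 0 * max (Real.log (wp t)⁻¹) 0 :=
      mul_nonneg (le_max_right _ _) (le_max_right _ _)
    have h3 : (0:ℝ) ≤ max (-x' t) 0 * max (Real.log (wm t)⁻¹) 0 :=
      mul_nonneg (le_max_right _ _) (le_max_right _ _)
    dsimp only
    nlinarith
  have hhfin : (∫⁻ t, ENNReal.ofReal (h t) ∂μ) < ⊤ := by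
    have hpt : ∀ t, ENNReal.ofReal (h t) ≤
        ENNReal.ofReal (|x' t| * max (Real.log |x' t|) 0)
        + ENNReal.ofReal (max (x' t) 0) * plogInv (wp t)
        + ENNReal.ofReal (max (-x' t) 0) * plogInv (wm t)
        + ENNReal.ofReal (2 * M) := by
      intro t
      rw [hhdef]
      refine le_trans ENNReal.ofReal_add_le (add_le_add ?_ le_rfl)
      refine le_trans ENNReal.ofReal_add_le (add_le_add ?_ (ofReal_mul_plogInv_ge _ _))
      refine le_trans ENNReal.ofReal_add_le (add_le_add le_rfl (ofReal_mul_plogInv_ge _ _))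
    calc (∫⁻ t, ENNReal.ofReal (h t) ∂μ) ≤
        (∫⁻ t, (ENNReal.ofReal (|x' t| * max (Real.log |x' t|) 0)
        + ENNReal.ofReal (max (x' t) 0) * plogInv (wp t)
        + ENNReal.ofReal (max (-x' t) 0) * plogInv (wm t)
        + ENNReal.ofReal (2 * M)) ∂μ) := lintegral_mono hpt
      _ = (∫⁻ t, ENNReal.ofReal (|x' t| * max (Real.log |x' t|) 0) ∂μ)
        + (∫⁻ t, ENNReal.ofReal (max (x' t) 0) * plogInv (wp t) ∂μ)
        + (∫⁻ t, ENNReal.ofReal (max (-x' t) 0) * plogInv (wm t) ∂μ)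
        + ENNReal.ofReal (2 * M) * μ Set.univ := by
          rw [lintegral_add_right _ measurable_const, lintegral_const,
            lintegral_add_right _ hBmmeas,
            lintegral_add_right _ hBpmeas]
      _ < ⊤ := by
          rw [hμdef, Measure.restrict_apply_univ]
          apply ENNReal.add_lt_top.mpr
          refine ⟨ENNReal.add_lt_top.mpr ⟨ENNReal.add_lt_top.mpr ⟨?_, ?_⟩, ?_⟩, ?_⟩
          · exact lt_top_iff_ne_top.mpr hA
          · exact lt_top_iff_ne_top.mpr hBp
          · exact lt_top_iff_ne_top.mpr hBm
          · exact ENNReal.mul_lt_top ENNReal.ofReal_lt_top hμfin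
  have hhint : Integrable h μ := by
    refine ⟨hhmeas.aestronglyMeasurable, ?_⟩
    rw [MeasureTheory.hasFiniteIntegral_iff_norm]
    have heq : ∀ t, ENNReal.ofReal ‖h t‖ = ENNReal.ofReal (h t) := by
      intro t; rw [Real.norm_eq_abs, abs_of_nonneg (hh0 t)]
    calc (∫⁻ t, ENNReal.ofReal ‖h t‖ ∂μ) = ∫⁻ t, ENNReal.ofReal (h t) ∂μ :=
          lintegral_congr heq
      _ < ⊤ := hhfin
  -- bound every member of the defining set
  have hbound : ∀ a : ℝ → ℝ, Measurable a → (∃ K, ∀ t, |a t| ≤ K) →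
      Frate T x' wp wm a ≤ ∫ t, h t ∂μ := by
    rintro a hameas ⟨K, hK⟩
    have hFint := frate_integrable T M x' wp wm a hx'meas hx'int hwpmeas hwmmeas
      hwp hwm hameas K hK
    rw [Frate, ← hμdef]
    apply integral_mono_ae hFint hhint
    filter_upwards [hp, hm] with t htp htm
    have := upper_full (a t) (x' t) (wp t) (wm t) M (hwp t).1 (hwp t).2
      (hwm t).1 (hwm t).2 htp htm
    rw [hhdef]
    dsimp only
    linarith
  rw [Irate]
  intro htop
  have hle : sSup {v : EReal | ∃ a : ℝ → ℝ, Measurable a ∧ (∃ K : ℝ, ∀ t, |a t| ≤ K) ∧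
      v = ((Frate T x' wp wm a : ℝ) : EReal)} ≤ ((∫ t, h t ∂μ : ℝ) : EReal) := by
    apply sSup_le
    rintro v ⟨a, hameas, hKex, rfl⟩
    exact_mod_cast EReal.coe_le_coe_iff.mpr (hbound a hameas hKex)
  rw [htop] at hle
  exact absurd (top_le_iff.mp hle) (EReal.coe_ne_top _)

lemma ereal_eq_top_of_forall (x : EReal) (hx : ∀ C : ℝ, (C : EReal) ≤ x) : x = ⊤ := by
  induction x using EReal.rec with
  | bot => exact absurd (hx 0) (by simp)
  | coe r =>
      have := EReal.coe_le_coe_iff.mp (hx (r+1))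
      linarith
  | top => rfl

lemma frate_neg (T : ℝ) (x' wp wm b : ℝ → ℝ) :
    Frate T (fun t => -x' t) wm wp b = Frate T x' wp wm (fun t => -(b t)) := by
  unfold Frate
  apply integral_congr_ae
  filter_upwards with t
  simp only [neg_neg]
  ring

lemma irate_top (T M : ℝ) (hT : 0 < T) (hM : 0 < M)
    (x' wp wm : ℝ → ℝ) (hx'meas : Measurable x') (hx'int : IntegrableOn x' (Set.Ioc 0 T))
    (hwpmeas : Measurable wp) (hwmmeas : Measurable wm)
    (hwp : ∀ t, wp t ∈ Set.Icc (0:ℝ) M) (hwm : ∀ t, wm t ∈ Set.Icc (0:ℝ) M)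
    (hdiv : (∫⁻ t in Set.Ioc 0 T,
        (ENNReal.ofReal (max (x' t) 0 * max (Real.log (max (x' t) 0)) 0)
          + ENNReal.ofReal (max (x' t) 0) * plogInv (wp t))) = ⊤
      ∨ (∫⁻ t in Set.Ioc 0 T,
        (ENNReal.ofReal (max (-x' t) 0 * max (Real.log (max (-x' t) 0)) 0)
          + ENNReal.ofReal (max (-x' t) 0) * plogInv (wm t))) = ⊤) :
    Irate T x' wp wm = ⊤ := by
  apply ereal_eq_top_of_forall
  intro C
  have hmem : ∃ a : ℝ → ℝ, Measurable a ∧ (∃ K : ℝ, ∀ t, |a t| ≤ K) ∧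
      C ≤ Frate T x' wp wm a := by
    rcases hdiv with hd | hd
    · exact irate_diverge_aux T M hT hM x' wp wm hx'meas hx'int hwpmeas hwmmeas
        hwp hwm hd C
    · obtain ⟨b, hbmeas, ⟨K, hK⟩, hb⟩ := irate_diverge_aux T M hT hM
        (fun t => -x' t) wm wp hx'meas.neg hx'int.neg hwmmeas hwpmeas hwm hwp hd C
      refine ⟨fun t => -(b t), hbmeas.neg, ⟨K, fun t => by simpa using hK t⟩, ?_⟩
      rw [← frate_neg]
      exact hb
  obtain ⟨a, hameas, hKex, hC⟩ := hmem
  refine le_trans ?_ (le_sSup ⟨a, hameas, hKex, rfl⟩)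
  exact_mod_cast EReal.coe_le_coe_iff.mpr hC


/-- **Finiteness of the random-walk rate function.** `I` is finite
if and only if `∫₀ᵀ |x'| log⁺|x'|`, `∫₀ᵀ (x')⁺ log⁺(1/w⁺)` and
`∫₀ᵀ (x')⁻ log⁺(1/w⁻)` are all finite. -/
theorem rw_rate_finiteness (T M : ℝ) (hT : 0 < T) (hM : 0 < M)
    (x x' : ℝ → ℝ) (hx'meas : Measurable x') (hx'int : IntegrableOn x' (Set.Ioc 0 T))
    (hAC : ∀ t ∈ Set.Icc 0 T, x t = x 0 + ∫ s in (0 : ℝ)..t, x' s)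
    (wp wm : ℝ → ℝ) (hwpmeas : Measurable wp) (hwmmeas : Measurable wm)
    (hwp : ∀ t, wp t ∈ Set.Icc (0 : ℝ) M) (hwm : ∀ t, wm t ∈ Set.Icc (0 : ℝ) M) :
    Irate T x' wp wm ≠ ⊤ ↔
      ((∫⁻ t in Set.Ioc 0 T,
          ENNReal.ofReal (|x' t| * max (Real.log |x' t|) 0)) ≠ ⊤ ∧
       (∫⁻ t in Set.Ioc 0 T,
          ENNReal.ofReal (max (x' t) 0) * plogInv (wp t)) ≠ ⊤ ∧
       (∫⁻ t in Set.Ioc 0 T,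
          ENNReal.ofReal (max (-x' t) 0) * plogInv (wm t)) ≠ ⊤) := by
  have hApmeas : Measurable fun t =>
      ENNReal.ofReal (max (x' t) 0 * max (Real.log (max (x' t) 0)) 0) :=
    ((hx'meas.max measurable_const).mul
      (((hx'meas.max measurable_const).log).max measurable_const)).ennreal_ofReal
  have hAmmeas : Measurable fun t =>
      ENNReal.ofReal (max (-x' t) 0 * max (Real.log (max (-x' t) 0)) 0) :=
    ((hx'meas.neg.max measurable_const).mul
      (((hx'meas.neg.max measurable_const).log).max measurable_const)).ennreal_ofReal
  have hBpmeas : Measurable fun t => ENNReal.ofReal (max (x' t) 0) * plogInv (wp t) :=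
    ((hx'meas.max measurable_const).ennreal_ofReal).mul (measurable_plogInv.comp hwpmeas)
  have hBmmeas : Measurable fun t => ENNReal.ofReal (max (-x' t) 0) * plogInv (wm t) :=
    ((hx'meas.neg.max measurable_const).ennreal_ofReal).mul (measurable_plogInv.comp hwmmeas)
  have hAsplit : (∫⁻ t in Set.Ioc 0 T,
      ENNReal.ofReal (|x' t| * max (Real.log |x' t|) 0)) =
      (∫⁻ t in Set.Ioc 0 T,
        ENNReal.ofReal (max (x' t) 0 * max (Real.log (max (x' t) 0)) 0))
      + (∫⁻ t in Set.Ioc 0 T,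
        ENNReal.ofReal (max (-x' t) 0 * max (Real.log (max (-x' t) 0)) 0)) := by
    rw [← lintegral_add_left hApmeas]
    apply lintegral_congr
    intro t
    rw [← posmax_log_split (x' t), ENNReal.ofReal_add
      (mul_nonneg (le_max_right _ _) (le_max_right _ _))
      (mul_nonneg (le_max_right _ _) (le_max_right _ _))]
  constructor
  · intro hI
    refine ⟨?_, ?_, ?_⟩
    · by_contra hA
      rw [hAsplit] at hA
      rcases ENNReal.add_eq_top.mp hA with h | h
      · exact hI (irate_top T M hT hM x' wp wm hx'meas hx'int hwpmeas hwmmeas hwp hwm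
          (Or.inl (by rw [lintegral_add_left hApmeas, h, top_add])))
      · exact hI (irate_top T M hT hM x' wp wm hx'meas hx'int hwpmeas hwmmeas hwp hwm
          (Or.inr (by rw [lintegral_add_left hAmmeas, h, top_add])))
    · by_contra hB
      exact hI (irate_top T M hT hM x' wp wm hx'meas hx'int hwpmeas hwmmeas hwp hwm
        (Or.inl (by rw [lintegral_add_left hApmeas, hB, add_top])))
    · by_contra hB
      exact hI (irate_top T M hT hM x' wp wm hx'meas hx'int hwpmeas hwmmeas hwp hwm
        (Or.inr (by rw [lintegral_add_left hAmmeas, hB, add_top])))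
  · rintro ⟨hA, hBp, hBm⟩
    exact irate_finite T M hT hM x' wp wm hx'meas hx'int hwpmeas hwmmeas hwp hwm
      hA hBp hBm

end
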